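/- In Tsirelson's space T, let z_n = (2/n²) ∑_{i=1}^{n²} e_{n³+i}. Then ∥z_n∥ = 1 for each n ≥ 2, and for every k ≥ 2, lim_{n→∞} ∥z_n∥_k = 1/2. -/

import Mathlib

/-- Restriction `E x` of a finitely supported sequence `x` to a set `E ⊆ ℕ`. -/
noncomputable def tRes (E : Finset ℕ) (x : ℕ →₀ ℝ) : ℕ →₀ ℝ := x.filter (· ∈ E)

/-- An admissible family for the Tsirelson norm: `n ≤ E_1 < ... < E_n`. -/
def tAdm (n : ℕ) (E : Fin n → Finset ℕ) : Prop :=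
  (∀ i : Fin n, ∀ a ∈ E i, n ≤ a) ∧
  (∀ i j : Fin n, i < j → ∀ a ∈ E i, ∀ b ∈ E j, a < b)

/-- `N` satisfies the implicit equation of the Tsirelson norm:
`‖x‖ = max(‖x‖_∞, sup_{n ≥ 2, n ≤ E_1 < ... < E_n} (1/2) ∑ ‖E_i x‖)`. -/
def tEq (N : (ℕ →₀ ℝ) → ℝ) : Prop :=
  ∀ x : ℕ →₀ ℝ, N x = max (⨆ i : ℕ, |x i|)
    (sSup {s : ℝ | ∃ n : ℕ, 2 ≤ n ∧ ∃ E : Fin n → Finset ℕ, tAdm n E ∧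
      s = (1 / 2) * ∑ i, N (tRes (E i) x)})

/-- `‖x‖_k = sup (1/2) ∑_{i=1}^k ‖E_i x‖` over `k ≤ E_1 < ... < E_k`. -/
noncomputable def tNormk (N : (ℕ →₀ ℝ) → ℝ) (k : ℕ) (x : ℕ →₀ ℝ) : ℝ :=
  sSup {s : ℝ | ∃ E : Fin k → Finset ℕ, tAdm k E ∧
    s = (1 / 2) * ∑ i, N (tRes (E i) x)}

/-- `z_n = (2/n²) ∑_{i=1}^{n²} e_{n³+i}`. -/
noncomputable def zvec (n : ℕ) : ℕ →₀ ℝ :=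
  ∑ i ∈ Finset.range (n ^ 2), Finsupp.single (n ^ 3 + i + 1) (2 / (n ^ 2 : ℝ))


noncomputable def chi (c : ℝ) (A : Finset ℕ) : ℕ →₀ ℝ := ∑ a ∈ A, Finsupp.single a c

lemma chi_apply (c : ℝ) (A : Finset ℕ) (m : ℕ) :
    chi c A m = if m ∈ A then c else 0 := by
  classical
  rw [chi, Finset.sum_apply']
  simp [Finsupp.single_apply]

lemma chi_empty (c : ℝ) : chi c ∅ = 0 := by simp [chi]

lemma tRes_chi (c : ℝ) (A E : Finset ℕ) : tRes E (chi c A) = chi c (A ∩ E) := by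
  classical
  ext m
  rw [tRes, Finsupp.filter_apply]
  by_cases h1 : m ∈ A <;> by_cases h2 : m ∈ E <;>
    simp [chi_apply, h1, h2]

lemma tAdm_empty (n : ℕ) : tAdm n (fun _ => (∅ : Finset ℕ)) :=
  ⟨fun _ a ha => absurd ha (Finset.notMem_empty a),
   fun _ _ _ a ha => absurd ha (Finset.notMem_empty a)⟩

lemma tAdm_disjoint {n : ℕ} {E : Fin n → Finset ℕ} (hE : tAdm n E) {i j : Fin n}
    (hij : i ≠ j) : Disjoint (E i) (E j) := by
  rw [Finset.disjoint_left]
  intro a hai haj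
  rcases lt_or_gt_of_ne hij with h | h
  · exact lt_irrefl a (hE.2 i j h a hai a haj)
  · exact lt_irrefl a (hE.2 j i h a haj a hai)

lemma ciSup_abs_chi_le (c : ℝ) (hc : 0 ≤ c) (A : Finset ℕ) :
    (⨆ i : ℕ, |chi c A i|) ≤ c := by
  apply ciSup_le
  intro m
  rw [chi_apply]
  split_ifs with h
  · simp [abs_of_nonneg hc]
  · simpa using hc

lemma N_zero (N : (ℕ →₀ ℝ) → ℝ) (hN : tEq N) : N 0 = 0 := by
  classical
  have h0 := hN 0
  simp only [Finsupp.coe_zero, Pi.zero_apply, abs_zero, ciSup_const] at h0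
  set S : Set ℝ := {s : ℝ | ∃ n : ℕ, 2 ≤ n ∧ ∃ E : Fin n → Finset ℕ, tAdm n E ∧
      s = (1 / 2) * ∑ i : Fin n, N (tRes (E i) 0)} with hS
  have hmem : (2 : ℝ) * N 0 ∈ S := by
    refine ⟨4, by norm_num, fun _ => ∅, tAdm_empty 4, ?_⟩
    simp [tRes, Finsupp.filter_zero]
    ring
  have hle : sSup S ≤ N 0 := by
    rw [h0]; exact le_max_right _ _
  by_cases hb : BddAbove S
  · have h2 : (2:ℝ) * N 0 ≤ sSup S := le_csSup hb hmem
    have : N 0 ≤ 0 := by nlinarith [le_trans h2 hle]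
    have hge : 0 ≤ N 0 := by rw [h0]; exact le_max_left _ _
    linarith
  · rw [Real.sSup_of_not_bddAbove hb] at h0
    simpa using h0

lemma sum_inter_card_le {n : ℕ} {E : Fin n → Finset ℕ} (hE : tAdm n E) (A : Finset ℕ) :
    ∑ i : Fin n, (A ∩ E i).card ≤ A.card := by
  classical
  rw [← Finset.card_biUnion (fun i _ j _ hij =>
    Finset.disjoint_of_subset_left Finset.inter_subset_right
      (Finset.disjoint_of_subset_right Finset.inter_subset_right (tAdm_disjoint hE hij)))]
  exact Finset.card_le_card (Finset.biUnion_subset.mpr (fun i _ => Finset.inter_subset_left))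

lemma chi_bound (N : (ℕ →₀ ℝ) → ℝ) (hN : tEq N) (c : ℝ) (hc : 0 < c) (A : Finset ℕ) :
    N (chi c A) ≤ c * max 1 ((A.card : ℝ) / 2) := by
  classical
  induction A using Finset.strongInduction with
  | _ A ih =>
    by_cases hA : A = ∅
    · subst hA
      rw [chi_empty, N_zero N hN]
      positivity
    · set M : ℝ := ((A.card : ℕ) : ℝ) with hMdef
      have hM1 : (1:ℝ) ≤ M := by
        have h : 1 ≤ A.card := Nat.one_le_iff_ne_zero.mpr (by simpa [Finset.card_eq_zero] using hA)
        rw [hMdef]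
        exact_mod_cast h
      have helem : ∀ s ∈ {s : ℝ | ∃ n : ℕ, 2 ≤ n ∧ ∃ E : Fin n → Finset ℕ, tAdm n E ∧
          s = (1 / 2) * ∑ i, N (tRes (E i) (chi c A))}, s ≤ max (N (chi c A) / 2) (c * M / 2) := by
        rintro s ⟨n, hn, E, hE, rfl⟩
        have hp : ∀ i : Fin n, N (tRes (E i) (chi c A)) = N (chi c (A ∩ E i)) :=
          fun i => by rw [tRes_chi]
        by_cases hfull : ∃ i, A ∩ E i = A
        · obtain ⟨i0, hi0⟩ := hfull
          have hsub : A ⊆ E i0 := Finset.inter_eq_left.mp hi0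
          have hzero : ∀ j : Fin n, j ≠ i0 → A ∩ E j = ∅ := by
            intro j hj
            rw [Finset.eq_empty_iff_forall_notMem]
            intro a ha
            rw [Finset.mem_inter] at ha
            exact (Finset.disjoint_left.mp (tAdm_disjoint hE hj) ha.2 (hsub ha.1))
          have hsum : ∑ i, N (tRes (E i) (chi c A)) = N (chi c A) := by
            rw [Finset.sum_congr rfl (fun i _ => hp i)]
            have : ∀ i : Fin n, N (chi c (A ∩ E i)) = if i = i0 then N (chi c A) else 0 := by
              intro i
              by_cases h : i = i0
              · rw [h, hi0, if_pos rfl]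
              · rw [hzero i h, chi_empty, N_zero N hN, if_neg h]
            rw [Finset.sum_congr rfl (fun i _ => this i)]
            simp
          rw [hsum]
          calc (1/2 : ℝ) * N (chi c A) = N (chi c A) / 2 := by ring
            _ ≤ max (N (chi c A) / 2) (c * M / 2) := le_max_left _ _
        · push_neg at hfull
          have hpb : ∀ i : Fin n, N (chi c (A ∩ E i)) ≤ c * ((A ∩ E i).card : ℝ) := by
            intro i
            by_cases h : A ∩ E i = ∅
            · rw [h, chi_empty, N_zero N hN]
              positivity
            · have hss : A ∩ E i ⊂ A :=
                Finset.ssubset_iff_subset_ne.mpr ⟨Finset.inter_subset_left, hfull i⟩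
              have h1 : (1:ℝ) ≤ ((A ∩ E i).card : ℝ) := by
                have : 1 ≤ (A ∩ E i).card :=
                  Nat.one_le_iff_ne_zero.mpr (by simpa [Finset.card_eq_zero] using h)
                exact_mod_cast this
              calc N (chi c (A ∩ E i)) ≤ c * max 1 (((A ∩ E i).card : ℝ) / 2) := ih _ hss
                _ ≤ c * ((A ∩ E i).card : ℝ) := by
                    apply mul_le_mul_of_nonneg_left _ hc.le
                    apply max_le h1
                    linarith
          have hcards : ∑ i : Fin n, ((A ∩ E i).card : ℝ) ≤ M := by
            rw [hMdef]
            exact_mod_cast sum_inter_card_le hE A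
          have hsumle : ∑ i, N (tRes (E i) (chi c A)) ≤ c * M := by
            calc ∑ i, N (tRes (E i) (chi c A))
                = ∑ i, N (chi c (A ∩ E i)) := Finset.sum_congr rfl (fun i _ => hp i)
              _ ≤ ∑ i, c * ((A ∩ E i).card : ℝ) := Finset.sum_le_sum (fun i _ => hpb i)
              _ = c * ∑ i, ((A ∩ E i).card : ℝ) := (Finset.mul_sum _ _ _).symm
              _ ≤ c * M := mul_le_mul_of_nonneg_left hcards hc.le
          calc (1/2 : ℝ) * ∑ i, N (tRes (E i) (chi c A))
              ≤ (1/2 : ℝ) * (c * M) := by linarith [hsumle]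
            _ = c * M / 2 := by ring
            _ ≤ max (N (chi c A) / 2) (c * M / 2) := le_max_right _ _
      have hsup : sSup {s : ℝ | ∃ n : ℕ, 2 ≤ n ∧ ∃ E : Fin n → Finset ℕ, tAdm n E ∧
          s = (1 / 2) * ∑ i, N (tRes (E i) (chi c A))} ≤ max (N (chi c A) / 2) (c * M / 2) := by
        apply Real.sSup_le helem
        have : (0:ℝ) ≤ c * M / 2 := by positivity
        exact le_trans this (le_max_right _ _)
      have hinf : (⨆ i : ℕ, |chi c A i|) ≤ c := ciSup_abs_chi_le c hc.le A
      have ht : N (chi c A) ≤ max c (max (N (chi c A) / 2) (c * M / 2)) :=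
        (hN (chi c A)).le.trans (max_le_max hinf hsup)
      set R := c * max 1 (M/2) with hR
      have h1 : c ≤ R := by
        rw [hR]
        nlinarith [le_max_left (1:ℝ) (M/2)]
      have h2 : c * M / 2 ≤ R := by
        rw [hR]
        nlinarith [le_max_right (1:ℝ) (M/2)]
      have hfin : N (chi c A) ≤ max R (N (chi c A) / 2) :=
        le_trans ht (max_le (h1.trans (le_max_left _ _))
          (max_le (le_max_right _ _) (h2.trans (le_max_left _ _))))
      rcases le_or_gt (N (chi c A)) R with h | h
      · exact h
      · exfalso
        rcases le_total (N (chi c A) / 2) R with h' | h'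
        · rw [max_eq_left h'] at hfin; linarith
        · rw [max_eq_right h'] at hfin; linarith

lemma N_chi_le_card (N : (ℕ →₀ ℝ) → ℝ) (hN : tEq N) {c : ℝ} (hc : 0 < c) (B : Finset ℕ) :
    N (chi c B) ≤ c * (B.card : ℝ) := by
  by_cases h : B = ∅
  · rw [h, chi_empty, N_zero N hN]; positivity
  · have h1 : (1:ℝ) ≤ (B.card : ℝ) := by
      have : 1 ≤ B.card := Nat.one_le_iff_ne_zero.mpr (by simpa [Finset.card_eq_zero] using h)
      exact_mod_cast this
    refine (chi_bound N hN c hc B).trans ?_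
    apply mul_le_mul_of_nonneg_left _ hc.le
    exact max_le h1 (by linarith)

lemma N_chi_le_one_add (N : (ℕ →₀ ℝ) → ℝ) (hN : tEq N) {c : ℝ} (hc : 0 < c) (B : Finset ℕ) :
    N (chi c B) ≤ c * (1 + (B.card : ℝ) / 2) := by
  refine (chi_bound N hN c hc B).trans ?_
  apply mul_le_mul_of_nonneg_left _ hc.le
  have : (0:ℝ) ≤ (B.card : ℝ) / 2 := by positivity
  exact max_le (by linarith) (by linarith)

lemma sum_tRes_le (N : (ℕ →₀ ℝ) → ℝ) (hN : tEq N) {c : ℝ} (hc : 0 < c) (A : Finset ℕ)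
    {n : ℕ} (E : Fin n → Finset ℕ) (hE : tAdm n E) :
    ∑ i : Fin n, N (tRes (E i) (chi c A)) ≤ c * (A.card : ℝ) := by
  calc ∑ i : Fin n, N (tRes (E i) (chi c A))
      = ∑ i : Fin n, N (chi c (A ∩ E i)) :=
        Finset.sum_congr rfl (fun i _ => by rw [tRes_chi])
    _ ≤ ∑ i : Fin n, c * (((A ∩ E i).card : ℕ) : ℝ) :=
        Finset.sum_le_sum (fun i _ => N_chi_le_card N hN hc _)
    _ = c * ∑ i : Fin n, (((A ∩ E i).card : ℕ) : ℝ) := (Finset.mul_sum _ _ _).symm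
    _ ≤ c * (A.card : ℝ) := by
        apply mul_le_mul_of_nonneg_left _ hc.le
        exact_mod_cast sum_inter_card_le hE A

lemma bddAbove_abs_chi {c : ℝ} (hc : 0 ≤ c) (A : Finset ℕ) :
    BddAbove (Set.range fun i => |chi c A i|) := by
  refine ⟨c, ?_⟩
  rintro _ ⟨m, rfl⟩
  show |chi c A m| ≤ c
  rw [chi_apply]
  split_ifs with h
  · simp [abs_of_nonneg hc]
  · simpa using hc

lemma N_chi_singleton (N : (ℕ →₀ ℝ) → ℝ) (hN : tEq N) {c : ℝ} (hc : 0 < c) (a : ℕ) :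
    N (chi c {a}) = c := by
  apply le_antisymm
  · refine (chi_bound N hN c hc {a}).trans ?_
    rw [Finset.card_singleton]
    norm_num
  · rw [hN (chi c {a})]
    refine le_trans ?_ (le_max_left _ _)
    have := le_ciSup (bddAbove_abs_chi hc.le {a}) a
    rwa [chi_apply, if_pos (Finset.mem_singleton_self a), abs_of_nonneg hc.le] at this

/-- The support of `zvec n` as a finset. -/
def zSupp (n : ℕ) : Finset ℕ := (Finset.range (n ^ 2)).image (fun i => n ^ 3 + i + 1)

lemma zvec_eq_chi (n : ℕ) : zvec n = chi (2 / (n:ℝ)^2) (zSupp n) := by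
  rw [zvec, chi, zSupp, Finset.sum_image]
  intro i _ j _ h
  simp only at h
  omega

lemma zSupp_card (n : ℕ) : (zSupp n).card = n ^ 2 := by
  rw [zSupp, Finset.card_image_of_injective _ (fun i j h => by omega), Finset.card_range]

lemma zSupp_mem_ge {n a : ℕ} (ha : a ∈ zSupp n) : n ^ 3 + 1 ≤ a := by
  rw [zSupp, Finset.mem_image] at ha
  obtain ⟨i, _, rfl⟩ := ha
  omega

lemma N_zvec (N : (ℕ →₀ ℝ) → ℝ) (hN : tEq N) (n : ℕ) (hn : 2 ≤ n) : N (zvec n) = 1 := by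
  have hn0 : (0:ℝ) < (n:ℝ)^2 := by positivity
  set c : ℝ := 2 / (n:ℝ)^2 with hcdef
  have hc : 0 < c := by positivity
  have hcM : c * (((zSupp n).card : ℕ) : ℝ) = 2 := by
    rw [zSupp_card, hcdef]
    push_cast
    field_simp
  have hc1 : c ≤ 1 := by
    rw [hcdef, div_le_one hn0]
    have : (2:ℝ) ≤ (n:ℝ) := by exact_mod_cast hn
    nlinarith
  rw [zvec_eq_chi]
  -- the admissible singleton decomposition giving value 1
  have hn2 : 2 ≤ n ^ 2 := by nlinarith
  have hn23 : n ^ 2 ≤ n ^ 3 := Nat.pow_le_pow_right (by omega) (by omega)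
  set E : Fin (n ^ 2) → Finset ℕ := fun i => {n ^ 3 + (i : ℕ) + 1} with hEdef
  have hadm : tAdm (n ^ 2) E := by
    constructor
    · intro i a ha
      rw [hEdef, Finset.mem_singleton] at ha
      omega
    · intro i j hij a ha b hb
      rw [hEdef, Finset.mem_singleton] at ha hb
      have : (i : ℕ) < (j : ℕ) := hij
      omega
  have hval : (1/2 : ℝ) * ∑ i : Fin (n ^ 2), N (tRes (E i) (chi c (zSupp n))) = 1 := by
    have hterm : ∀ i : Fin (n ^ 2), N (tRes (E i) (chi c (zSupp n))) = c := by
      intro i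
      have hmem : n ^ 3 + (i : ℕ) + 1 ∈ zSupp n := by
        rw [zSupp, Finset.mem_image]
        exact ⟨(i : ℕ), Finset.mem_range.mpr i.isLt, rfl⟩
      rw [tRes_chi, hEdef]
      rw [Finset.inter_eq_right.mpr (Finset.singleton_subset_iff.mpr hmem)]
      exact N_chi_singleton N hN hc _
    rw [Finset.sum_congr rfl (fun i _ => hterm i), Finset.sum_const, Finset.card_univ,
      Fintype.card_fin, nsmul_eq_mul]
    push_cast
    rw [hcdef]
    field_simp
  apply le_antisymm
  · rw [hN (chi c (zSupp n))]
    apply max_le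
    · exact (ciSup_abs_chi_le c hc.le _).trans hc1
    · apply Real.sSup_le _ (by norm_num)
      rintro s ⟨m, hm, F, hF, rfl⟩
      have := sum_tRes_le N hN hc (zSupp n) F hF
      rw [hcM] at this
      linarith
  · rw [hN (chi c (zSupp n))]
    refine le_trans ?_ (le_max_right _ _)
    apply le_csSup
    · refine ⟨1, ?_⟩
      rintro s ⟨m, hm, F, hF, rfl⟩
      have := sum_tRes_le N hN hc (zSupp n) F hF
      rw [hcM] at this
      linarith
    · exact ⟨n ^ 2, hn2, E, hadm, hval.symm⟩

lemma tNormk_bounds (N : (ℕ →₀ ℝ) → ℝ) (hN : tEq N) (k n : ℕ) (hk : 2 ≤ k)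
    (hn : 2 ≤ n) (hkn : k ≤ n) :
    1/2 ≤ tNormk N k (zvec n) ∧ tNormk N k (zvec n) ≤ 1/2 + (k:ℝ) / (n:ℝ)^2 := by
  haveI : NeZero k := ⟨by omega⟩
  have hn0 : (0:ℝ) < (n:ℝ)^2 := by positivity
  set c : ℝ := 2 / (n:ℝ)^2 with hcdef
  have hc : 0 < c := by positivity
  rw [tNormk]
  have hub : ∀ s ∈ {s : ℝ | ∃ E : Fin k → Finset ℕ, tAdm k E ∧
      s = (1 / 2) * ∑ i, N (tRes (E i) (zvec n))}, s ≤ 1/2 + (k:ℝ) / (n:ℝ)^2 := by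
    rintro s ⟨E, hE, rfl⟩
    have hsum : ∑ i : Fin k, N (tRes (E i) (zvec n)) ≤ c * k + (c/2) * (n:ℝ)^2 := by
      calc ∑ i : Fin k, N (tRes (E i) (zvec n))
          = ∑ i : Fin k, N (chi c ((zSupp n) ∩ E i)) :=
            Finset.sum_congr rfl (fun i _ => by rw [zvec_eq_chi, tRes_chi])
        _ ≤ ∑ i : Fin k, c * (1 + ((((zSupp n) ∩ E i).card : ℕ) : ℝ) / 2) :=
            Finset.sum_le_sum (fun i _ => N_chi_le_one_add N hN hc _)
        _ = ∑ i : Fin k, (c + (c/2) * ((((zSupp n) ∩ E i).card : ℕ) : ℝ)) :=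
            Finset.sum_congr rfl (fun i _ => by ring)
        _ = c * k + (c/2) * ∑ i : Fin k, ((((zSupp n) ∩ E i).card : ℕ) : ℝ) := by
            rw [Finset.sum_add_distrib, Finset.sum_const, Finset.card_univ,
              Fintype.card_fin, nsmul_eq_mul, ← Finset.mul_sum]
            ring
        _ ≤ c * k + (c/2) * (n:ℝ)^2 := by
            have h1 : ∑ i : Fin k, ((((zSupp n) ∩ E i).card : ℕ) : ℝ) ≤ ((n^2 : ℕ) : ℝ) := by
              rw [← zSupp_card n]
              exact_mod_cast sum_inter_card_le hE (zSupp n)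
            have h2 : ((n^2 : ℕ) : ℝ) = (n:ℝ)^2 := by push_cast; ring
            nlinarith
    have heq : (1/2 : ℝ) * (c * k + (c/2) * (n:ℝ)^2) = 1/2 + (k:ℝ)/(n:ℝ)^2 := by
      rw [hcdef]
      field_simp
      ring
    calc (1/2 : ℝ) * ∑ i : Fin k, N (tRes (E i) (zvec n))
        ≤ (1/2 : ℝ) * (c * k + (c/2) * (n:ℝ)^2) := by linarith
      _ = 1/2 + (k:ℝ)/(n:ℝ)^2 := heq
  constructor
  · -- lower bound via E₀ = (zSupp n, ∅, ..., ∅)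
    have hadm : tAdm k (fun i : Fin k => if i = 0 then zSupp n else ∅) := by
      constructor
      · intro i a ha
        have ha' : a ∈ (if i = (0 : Fin k) then zSupp n else ∅) := ha
        by_cases h : i = 0
        · rw [if_pos h] at ha'
          have := zSupp_mem_ge ha'
          have h3 : n ≤ n ^ 3 := Nat.le_self_pow (by omega) n
          omega
        · rw [if_neg h] at ha'
          exact absurd ha' (Finset.notMem_empty a)
      · intro i j hij a ha b hb
        have hb' : b ∈ (if j = (0 : Fin k) then zSupp n else ∅) := hb
        have hj : j ≠ 0 := by
          intro h
          rw [h] at hij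
          exact absurd hij (by simp [Fin.lt_def])
        rw [if_neg hj] at hb'
        exact absurd hb' (Finset.notMem_empty b)
    have hterm : ∀ i : Fin k,
        N (tRes (if i = (0 : Fin k) then zSupp n else ∅) (zvec n))
          = if i = (0 : Fin k) then (1:ℝ) else 0 := by
      intro i
      by_cases h : i = 0
      · rw [if_pos h, if_pos h, zvec_eq_chi, tRes_chi, Finset.inter_self, ← zvec_eq_chi]
        exact N_zvec N hN n hn
      · rw [if_neg h, if_neg h, zvec_eq_chi, tRes_chi, Finset.inter_empty, chi_empty]
        exact N_zero N hN
    have hval : (1/2 : ℝ) * ∑ i : Fin k,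
        N (tRes (if i = (0 : Fin k) then zSupp n else ∅) (zvec n)) = 1/2 := by
      rw [Finset.sum_congr rfl (fun i _ => hterm i)]
      rw [Finset.sum_ite_eq' Finset.univ (0 : Fin k) (fun _ => (1:ℝ))]
      simp
    apply le_csSup ⟨1/2 + (k:ℝ)/(n:ℝ)^2, fun s hs => hub s hs⟩
    exact ⟨fun i : Fin k => if i = 0 then zSupp n else ∅, hadm, hval.symm⟩
  · apply Real.sSup_le hub
    positivity


/-- in Tsirelson's space `T`, `‖z_n‖ = 1` for `n ≥ 2` and for every
`k ≥ 2`, `lim_{n→∞} ‖z_n‖_k = 1/2`. -/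
theorem stmt11 (N : (ℕ →₀ ℝ) → ℝ) (hN : tEq N) :
    (∀ n : ℕ, 2 ≤ n → N (zvec n) = 1) ∧
    (∀ k : ℕ, 2 ≤ k →
      Filter.Tendsto (fun n => tNormk N k (zvec n)) Filter.atTop (nhds (1 / 2))) := by
  constructor
  · exact fun n hn => N_zvec N hN n hn
  · intro k hk
    have hup : Filter.Tendsto (fun n : ℕ => 1/2 + (k:ℝ)/(n:ℝ)^2) Filter.atTop (nhds (1/2)) := by
      have h1 : Filter.Tendsto (fun n : ℕ => (n:ℝ)^2) Filter.atTop Filter.atTop :=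
        (Filter.tendsto_pow_atTop (two_ne_zero)).comp tendsto_natCast_atTop_atTop
      have h2 : Filter.Tendsto (fun n : ℕ => (k:ℝ)/(n:ℝ)^2) Filter.atTop (nhds 0) :=
        Filter.Tendsto.div_atTop tendsto_const_nhds h1
      have := h2.const_add (1/2 : ℝ)
      simpa using this
    refine tendsto_of_tendsto_of_tendsto_of_le_of_le' tendsto_const_nhds hup ?_ ?_
    · filter_upwards [Filter.eventually_ge_atTop (max 2 k)] with n hn
      exact (tNormk_bounds N hN k n hk (le_trans (le_max_left _ _) hn)
        (le_trans (le_max_right _ _) hn)).1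
    · filter_upwards [Filter.eventually_ge_atTop (max 2 k)] with n hn
      exact (tNormk_bounds N hN k n hk (le_trans (le_max_left _ _) hn)
        (le_trans (le_max_right _ _) hn)).2
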